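/- For every one-way deterministic one-counter automaton (1D1CA) M over the alphabet {0,#}, there exist positive even integers a, b, a', b' with (a,b) ≠ (a',b') such that the configuration of M reached after reading ¢0^a#0^b# equals the configuration of M reached after reading ¢0^{a'}#0^{b'}#. -/
import Mathlib


/-- Input symbols extended with the left (`cent`) and right (`dollar`) end-markers. -/
inductive TSym (α : Type) : Type
  | cent : TSym α
  | letter : α → TSym α
  | dollar : TSym α

/-- The tape content `¢ w $` for an input word `w`. -/
def tagged {α : Type} (w : List α) : List (TSym α) :=
  TSym.cent :: (w.map TSym.letter ++ [TSym.dollar])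

/-- A one-way deterministic one-counter automaton. -/
structure OneD1CA (α : Type) where
  Q : Type
  [fintypeQ : Fintype Q]
  [decQ : DecidableEq Q]
  q0 : Q
  acc : Set Q
  m : ℕ
  δ : Q → TSym α → Bool → Q × ℤ
  bound : ∀ q σ z, |(δ q σ z).2| ≤ (m : ℤ)

attribute [instance] OneD1CA.fintypeQ OneD1CA.decQ

namespace OneD1CA

variable {α : Type} (M : OneD1CA α)

/-- One computation step on a configuration (state, counter value). -/
def step (p : M.Q × ℤ) (σ : TSym α) : M.Q × ℤ :=
  ((M.δ p.1 σ (decide (p.2 = 0))).1, p.2 + (M.δ p.1 σ (decide (p.2 = 0))).2)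

/-- Configuration reached from the initial configuration after reading a list of tape symbols. -/
def confAfter (l : List (TSym α)) : M.Q × ℤ :=
  l.foldl M.step (M.q0, 0)

/-- The automaton accepts `w` iff the state after reading `¢ w $` is accepting. -/
def accepts (w : List α) : Prop :=
  (M.confAfter (tagged w)).1 ∈ M.acc

/-- The automaton recognizes the language `L` if it accepts exactly the members of `L`. -/
def recognizes (L : Set (List α)) : Prop :=
  ∀ w : List α, M.accepts w ↔ w ∈ L

end OneD1CA

/-- The alphabet `{0, #}` (`z` is the symbol `0`, `h` is the symbol `#`). -/
inductive XSym : Type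
  | z : XSym
  | h : XSym
deriving DecidableEq

/-- The block `0^n`. -/
def zeros (n : ℕ) : List XSym := List.replicate n XSym.z

/-- The string `0^a # 0^b # 0^c # 0^d # 0^{k1} # 0^{k2} # 0^{l1} # 0^{l2}`. -/
def xweWord (a b c d k1 k2 l1 l2 : ℕ) : List XSym :=
  zeros a ++ [XSym.h] ++ zeros b ++ [XSym.h] ++ zeros c ++ [XSym.h] ++ zeros d ++ [XSym.h] ++
    zeros k1 ++ [XSym.h] ++ zeros k2 ++ [XSym.h] ++ zeros l1 ++ [XSym.h] ++ zeros l2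

/-- `(-1) ^ [u = v]`. -/
def xweSign (u v : ℕ) : ℤ := if u = v then -1 else 1

/-- The promise of the problem `XOR-EQ`. -/
def xwePromise (a b c d k1 k2 l1 l2 : ℕ) : Prop :=
  0 < a ∧ Even a ∧ 0 < b ∧ Even b ∧ 0 < c ∧ Even c ∧ 0 < d ∧ Even d ∧
    (a : ℤ) - (c : ℤ) + xweSign a c * ((k1 : ℤ) - (k2 : ℤ)) =
      (b : ℤ) - (d : ℤ) + xweSign b d * ((l1 : ℤ) - (l2 : ℤ))

/-- Yes-instances of `XOR-EQ`: promised strings where exactly one of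
`a = c`, `b = d` holds. -/
def XorEqYes : Set (List XSym) :=
  {w | ∃ a b c d k1 k2 l1 l2 : ℕ, xwePromise a b c d k1 k2 l1 l2 ∧
    Xor' (a = c) (b = d) ∧ w = xweWord a b c d k1 k2 l1 l2}

/-- No-instances of `XOR-EQ`: the remaining promised strings. -/
def XorEqNo : Set (List XSym) :=
  {w | ∃ a b c d k1 k2 l1 l2 : ℕ, xwePromise a b c d k1 k2 l1 l2 ∧
    ¬ Xor' (a = c) (b = d) ∧ w = xweWord a b c d k1 k2 l1 l2}

/-- The partial input `0^a # 0^b #`. -/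
def prefixAB (a b : ℕ) : List XSym :=
  zeros a ++ [XSym.h] ++ zeros b ++ [XSym.h]

lemma abs_counter_foldl {α : Type} (M : OneD1CA α) :
    ∀ (l : List (TSym α)) (p : M.Q × ℤ),
      |(l.foldl M.step p).2| ≤ |p.2| + M.m * l.length := by
  intro l
  induction l with
  | nil => intro p; simp
  | cons σ l ih =>
    intro p
    have h1 : |(M.step p σ).2| ≤ |p.2| + M.m := by
      have := M.bound p.1 σ (decide (p.2 = 0))
      calc |(M.step p σ).2| ≤ |p.2| + |(M.δ p.1 σ (decide (p.2 = 0))).2| :=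
            abs_add_le _ _
        _ ≤ |p.2| + M.m := by linarith
    have h2 := ih (M.step p σ)
    simp only [List.foldl_cons, List.length_cons]
    push_cast
    push_cast at h2
    linarith

lemma abs_confAfter {α : Type} (M : OneD1CA α) (l : List (TSym α)) :
    |(M.confAfter l).2| ≤ M.m * l.length := by
  have := abs_counter_foldl M l (M.q0, 0)
  simpa [OneD1CA.confAfter] using this

lemma prefixAB_length (a b : ℕ) : (prefixAB a b).length = a + b + 2 := by
  simp [prefixAB, zeros]
  ring

/-- for every 1D1CA there are two distinct partial inputs
`¢ 0^a # 0^b #` and `¢ 0^{a'} # 0^{b'} #` (all exponents positive and even)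
leading to the same configuration. -/
theorem stmt2 (M : OneD1CA XSym) :
    ∃ a b a' b' : ℕ,
      0 < a ∧ Even a ∧ 0 < b ∧ Even b ∧ 0 < a' ∧ Even a' ∧ 0 < b' ∧ Even b' ∧
      (a, b) ≠ (a', b') ∧
      M.confAfter (TSym.cent :: (prefixAB a b).map TSym.letter) =
        M.confAfter (TSym.cent :: (prefixAB a' b').map TSym.letter) := by
  classical
  set q : ℕ := Fintype.card M.Q with hq
  have hq1 : 1 ≤ q := Fintype.card_pos_iff.mpr ⟨M.q0⟩
  set K : ℕ := 11 * (q + 1) * (M.m + 1) with hK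
  have hK1 : 1 ≤ K := by
    rw [hK]; exact Nat.one_le_iff_ne_zero.mpr (by positivity)
  set B : ℤ := (M.m : ℤ) * (4 * K + 3) with hB
  have hB0 : 0 ≤ B := by positivity
  set f : ℕ × ℕ → M.Q × ℤ := fun ij =>
    M.confAfter (TSym.cent :: (prefixAB (2 * ij.1) (2 * ij.2)).map TSym.letter) with hf
  set s : Finset (ℕ × ℕ) := Finset.Icc 1 K ×ˢ Finset.Icc 1 K with hs
  set t : Finset (M.Q × ℤ) := Finset.univ ×ˢ Finset.Icc (-B) B with ht
  have hmaps : ∀ ij ∈ s, f ij ∈ t := by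
    rintro ⟨i, j⟩ hij
    simp only [hs, Finset.mem_product, Finset.mem_Icc] at hij
    have hlen : (TSym.cent :: (prefixAB (2 * i) (2 * j)).map TSym.letter).length
        = 2 * i + 2 * j + 3 := by
      simp [prefixAB_length]
    have hcnt := abs_confAfter M (TSym.cent :: (prefixAB (2 * i) (2 * j)).map TSym.letter)
    rw [hlen] at hcnt
    have hle : ((M.m : ℤ)) * (2 * i + 2 * j + 3) ≤ B := by
      have : (2 * i + 2 * j + 3 : ℤ) ≤ 4 * K + 3 := by
        have h1 : (i : ℤ) ≤ K := by exact_mod_cast hij.1.2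
        have h2 : (j : ℤ) ≤ K := by exact_mod_cast hij.2.2
        linarith
      have : (M.m : ℤ) * (2 * i + 2 * j + 3) ≤ (M.m : ℤ) * (4 * K + 3) :=
        mul_le_mul_of_nonneg_left this (by positivity)
      simpa [hB] using this
    have habs : |(f (i, j)).2| ≤ B := by
      refine le_trans ?_ hle
      have : ((2 * i + 2 * j + 3 : ℕ) : ℤ) = (2 * i + 2 * j + 3 : ℤ) := by push_cast; ring
      calc |(f (i, j)).2| ≤ (M.m : ℤ) * ((2 * i + 2 * j + 3 : ℕ) : ℤ) := by
            exact_mod_cast hcnt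
        _ = (M.m : ℤ) * (2 * i + 2 * j + 3 : ℤ) := by rw [this]
    simp only [ht, Finset.mem_product, Finset.mem_univ, Finset.mem_Icc, true_and]
    exact abs_le.mp habs
  have hcard : t.card < s.card := by
    have hscard : s.card = K * K := by
      simp [hs, Nat.card_Icc]
    have htcard : t.card = q * (2 * B + 1).toNat := by
      simp [ht, Finset.card_product, Int.card_Icc, hq]
      omega
    have htoNat : (2 * B + 1).toNat = 2 * M.m * (4 * K + 3) + 1 := by
      have : (2 * B + 1) = ((2 * M.m * (4 * K + 3) + 1 : ℕ) : ℤ) := by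
        push_cast [hB]; ring
      rw [this, Int.toNat_natCast]
    rw [hscard, htcard, htoNat]
    -- need q * (2m(4K+3)+1) < K * K with K = 11(q+1)(m+1), q ≥ 1
    set mm := M.m
    have e1 : 8 * q * mm + q + 1 ≤ K := by
      rw [hK]; nlinarith
    have e2 : 6 * mm + 1 ≤ K := by
      rw [hK]; nlinarith
    calc q * (2 * mm * (4 * K + 3) + 1)
        = (8 * q * mm) * K + q * (6 * mm + 1) := by ring
      _ ≤ (8 * q * mm) * K + q * K := by
          exact Nat.add_le_add_left (Nat.mul_le_mul_left q e2) _
      _ = (8 * q * mm + q) * K := by ring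
      _ < K * K := by
          apply Nat.mul_lt_mul_of_lt_of_le _ (le_refl K) hK1
          omega
  obtain ⟨ij, hij, ij', hij', hne, heq⟩ :=
    Finset.exists_ne_map_eq_of_card_lt_of_maps_to hcard hmaps
  simp only [hs, Finset.mem_product, Finset.mem_Icc] at hij hij'
  refine ⟨2 * ij.1, 2 * ij.2, 2 * ij'.1, 2 * ij'.2, ?_, ⟨ij.1, by ring⟩, ?_,
    ⟨ij.2, by ring⟩, ?_, ⟨ij'.1, by ring⟩, ?_, ⟨ij'.2, by ring⟩, ?_, heq⟩
  · omega
  · omega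
  · omega
  · omega
  · intro h
    apply hne
    have h1 : 2 * ij.1 = 2 * ij'.1 := congrArg Prod.fst h
    have h2 : 2 * ij.2 = 2 * ij'.2 := congrArg Prod.snd h
    exact Prod.ext (by omega) (by omega)
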